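/- arXiv:2307.04924 — 3 statements merged into one kernel-verified Lean document; each statement's English description precedes it below -/
import Mathlib

section
/- Let N1 and N2 be independent Poisson random variables with means μ1 and μ2 respectively, with μ1 < μ2. Then P(N1 ≥ N2) ≤ exp(-(√μ1 - √μ2)²). -/
/-- The Poisson probability mass function with rate `μ`. -/
noncomputable def poiPMF (μ : ℝ) (k : ℕ) : ℝ := Real.exp (-μ) * μ ^ k / (Nat.factorial k)

lemma real_exp_tsum_div (x : ℝ) : ∑' n : ℕ, x ^ n / (Nat.factorial n) = Real.exp x := by
  rw [Real.exp_eq_exp_ℝ, NormedSpace.exp_eq_tsum_div]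

lemma poi_tsum (μ c : ℝ) : ∑' n : ℕ, poiPMF μ n * c ^ n = Real.exp (μ * c - μ) := by
  have h : ∀ n : ℕ, poiPMF μ n * c ^ n
      = Real.exp (-μ) * ((μ * c) ^ n / (Nat.factorial n)) := by
    intro n; simp only [poiPMF, mul_pow]; ring
  rw [tsum_congr h, tsum_mul_left, real_exp_tsum_div, ← Real.exp_add]
  ring_nf

lemma poi_summable (μ c : ℝ) : Summable (fun n : ℕ => poiPMF μ n * c ^ n) := by
  have h : ∀ n : ℕ, poiPMF μ n * c ^ n
      = Real.exp (-μ) * ((μ * c) ^ n / (Nat.factorial n)) := by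
    intro n; simp only [poiPMF, mul_pow]; ring
  simpa only [h] using (Real.summable_pow_div_factorial (μ * c)).mul_left _

lemma poiPMF_nonneg (μ : ℝ) (hμ : 0 ≤ μ) (k : ℕ) : 0 ≤ poiPMF μ k := by
  unfold poiPMF
  positivity

/-- For independent `N₁ ~ Poisson μ₁`, `N₂ ~ Poisson μ₂` with `μ₁ < μ₂`,
`P(N₁ ≥ N₂) ≤ exp (-(√μ₁ - √μ₂)²)`. -/
theorem poisson_ge_chernoff (μ₁ μ₂ : ℝ) (h₁ : 0 < μ₁) (h₂ : 0 < μ₂) (hlt : μ₁ < μ₂) :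
    (∑' p : ℕ × ℕ, if p.2 ≤ p.1 then poiPMF μ₁ p.1 * poiPMF μ₂ p.2 else 0)
      ≤ Real.exp (-(Real.sqrt μ₁ - Real.sqrt μ₂) ^ 2) := by
  set a := Real.sqrt μ₁ with ha
  set b := Real.sqrt μ₂ with hb
  have ha0 : 0 < a := Real.sqrt_pos.mpr h₁
  have hb0 : 0 < b := Real.sqrt_pos.mpr h₂
  have hab : a < b := Real.sqrt_lt_sqrt h₁.le hlt
  set θ : ℝ := b / a with hθ
  have hθ1 : 1 ≤ θ := (one_le_div ha0).mpr hab.le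
  have hθ0 : 0 < θ := lt_of_lt_of_le one_pos hθ1
  -- the dominating function
  set f : ℕ → ℝ := fun n => poiPMF μ₁ n * θ ^ n with hf
  set g : ℕ → ℝ := fun m => poiPMF μ₂ m * θ⁻¹ ^ m with hg
  have hfs : Summable f := poi_summable μ₁ θ
  have hgs : Summable g := poi_summable μ₂ θ⁻¹
  have hf0 : ∀ n, 0 ≤ f n := fun n =>
    mul_nonneg (poiPMF_nonneg _ h₁.le n) (pow_nonneg hθ0.le n)
  have hg0 : ∀ m, 0 ≤ g m := fun m =>
    mul_nonneg (poiPMF_nonneg _ h₂.le m) (pow_nonneg (inv_nonneg.mpr hθ0.le) m)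
  have hFs : Summable (fun p : ℕ × ℕ => f p.1 * g p.2) :=
    hfs.mul_of_nonneg hgs hf0 hg0
  have hle : ∀ p : ℕ × ℕ,
      (if p.2 ≤ p.1 then poiPMF μ₁ p.1 * poiPMF μ₂ p.2 else 0) ≤ f p.1 * g p.2 := by
    rintro ⟨n, m⟩
    dsimp only
    split_ifs with h
    · have h1 : (1 : ℝ) ≤ θ ^ n * θ⁻¹ ^ m := by
        rw [inv_pow, ← div_eq_mul_inv, le_div_iff₀ (pow_pos hθ0 m), one_mul]
        exact pow_le_pow_right₀ hθ1 h
      calc poiPMF μ₁ n * poiPMF μ₂ m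
          = poiPMF μ₁ n * poiPMF μ₂ m * 1 := by ring
        _ ≤ poiPMF μ₁ n * poiPMF μ₂ m * (θ ^ n * θ⁻¹ ^ m) := by
            apply mul_le_mul_of_nonneg_left h1
            exact mul_nonneg (poiPMF_nonneg _ h₁.le n) (poiPMF_nonneg _ h₂.le m)
        _ = (poiPMF μ₁ n * θ ^ n) * (poiPMF μ₂ m * θ⁻¹ ^ m) := by ring
    · exact mul_nonneg (hf0 n) (hg0 m)
  have hsum_le : (∑' p : ℕ × ℕ, if p.2 ≤ p.1 then poiPMF μ₁ p.1 * poiPMF μ₂ p.2 else 0)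
      ≤ ∑' p : ℕ × ℕ, f p.1 * g p.2 := by
    by_cases hS : Summable (fun p : ℕ × ℕ =>
        if p.2 ≤ p.1 then poiPMF μ₁ p.1 * poiPMF μ₂ p.2 else 0)
    · exact Summable.tsum_le_tsum hle hS hFs
    · rw [tsum_eq_zero_of_not_summable hS]
      exact tsum_nonneg fun p => mul_nonneg (hf0 p.1) (hg0 p.2)
  have hprod : (∑' p : ℕ × ℕ, f p.1 * g p.2) = (∑' n, f n) * (∑' m, g m) := by
    rw [← tsum_mul_tsum_of_summable_norm]
    · simpa only [Real.norm_eq_abs, abs_of_nonneg (hf0 _)] using hfs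
    · simpa only [Real.norm_eq_abs, abs_of_nonneg (hg0 _)] using hgs
  have hμ1θ : μ₁ * θ = a * b := by
    rw [hθ, ← Real.sq_sqrt h₁.le, ← ha]
    field_simp
  have hμ2θ : μ₂ * θ⁻¹ = a * b := by
    rw [hθ, ← Real.sq_sqrt h₂.le, ← hb]
    field_simp
  have hval : (∑' n, f n) * (∑' m, g m) = Real.exp (-(a - b) ^ 2) := by
    rw [hf, hg, poi_tsum, poi_tsum, ← Real.exp_add, hμ1θ, hμ2θ]
    congr 1
    have e1 : μ₁ = a ^ 2 := (Real.sq_sqrt h₁.le).symm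
    have e2 : μ₂ = b ^ 2 := (Real.sq_sqrt h₂.le).symm
    rw [e1, e2]; ring
  calc _ ≤ ∑' p : ℕ × ℕ, f p.1 * g p.2 := hsum_le
    _ = Real.exp (-(a - b) ^ 2) := by rw [hprod, hval]
end

section
/- Let N1 ~ Poisson(μ1) and N2 ~ Poisson(μ2) be independent with μ1 > μ2 > 0. Then P(N1 > N2) > P(N2 > N1). -/
lemma poiPMF_pos {μ : ℝ} (hμ : 0 < μ) (k : ℕ) : 0 < poiPMF μ k := by
  unfold poiPMF
  positivity

lemma poiPMF_summable {μ : ℝ} : Summable (poiPMF μ) := by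
  have := (Real.summable_pow_div_factorial μ).mul_left (Real.exp (-μ))
  refine this.congr fun k => ?_
  unfold poiPMF; ring

lemma key_le {μ₁ μ₂ : ℝ} (h₂ : 0 < μ₂) (hlt : μ₂ < μ₁) {j k : ℕ} (hjk : j < k) :
    poiPMF μ₁ j * poiPMF μ₂ k ≤ poiPMF μ₁ k * poiPMF μ₂ j := by
  have h₁ : 0 < μ₁ := h₂.trans hlt
  unfold poiPMF
  rw [div_mul_div_comm, div_mul_div_comm, div_le_div_iff₀ (by positivity) (by positivity)]
  have key : μ₁ ^ j * μ₂ ^ k ≤ μ₁ ^ k * μ₂ ^ j := by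
    have hd : k = j + (k - j) := by omega
    rw [hd, pow_add, pow_add]
    have : μ₂ ^ (k - j) ≤ μ₁ ^ (k - j) := pow_le_pow_left₀ h₂.le hlt.le _
    calc μ₁ ^ j * (μ₂ ^ j * μ₂ ^ (k - j)) = (μ₁ ^ j * μ₂ ^ j) * μ₂ ^ (k - j) := by ring
      _ ≤ (μ₁ ^ j * μ₂ ^ j) * μ₁ ^ (k - j) := by
          apply mul_le_mul_of_nonneg_left this (by positivity)
      _ = μ₁ ^ j * μ₁ ^ (k - j) * μ₂ ^ j := by ring
  calc Real.exp (-μ₁) * μ₁ ^ j * (Real.exp (-μ₂) * μ₂ ^ k) * (↑k.factorial * ↑j.factorial)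
      = (Real.exp (-μ₁) * Real.exp (-μ₂) * (↑k.factorial * ↑j.factorial)) * (μ₁ ^ j * μ₂ ^ k) := by
        ring
    _ ≤ (Real.exp (-μ₁) * Real.exp (-μ₂) * (↑k.factorial * ↑j.factorial)) * (μ₁ ^ k * μ₂ ^ j) := by
        apply mul_le_mul_of_nonneg_left key (by positivity)
    _ = Real.exp (-μ₁) * μ₁ ^ k * (Real.exp (-μ₂) * μ₂ ^ j) * (↑j.factorial * ↑k.factorial) := by
        ring

/-- For independent `N₁ ~ Poisson μ₁`, `N₂ ~ Poisson μ₂` with `μ₁ > μ₂ > 0`,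
`P(N₁ > N₂) > P(N₂ > N₁)`. -/
theorem poisson_larger_rate_wins (μ₁ μ₂ : ℝ) (h₂ : 0 < μ₂) (hlt : μ₂ < μ₁) :
    (∑' p : ℕ × ℕ, if p.2 < p.1 then poiPMF μ₁ p.1 * poiPMF μ₂ p.2 else 0)
      > (∑' p : ℕ × ℕ, if p.1 < p.2 then poiPMF μ₁ p.1 * poiPMF μ₂ p.2 else 0) := by
  have h₁ : 0 < μ₁ := h₂.trans hlt
  -- summability of the full product
  have hprod : Summable (fun p : ℕ × ℕ => poiPMF μ₁ p.1 * poiPMF μ₂ p.2) :=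
    (poiPMF_summable).mul_of_nonneg poiPMF_summable
      (fun k => (poiPMF_pos h₁ k).le) (fun k => (poiPMF_pos h₂ k).le)
  have hnn : ∀ p : ℕ × ℕ, 0 ≤ poiPMF μ₁ p.1 * poiPMF μ₂ p.2 := fun p =>
    mul_nonneg (poiPMF_pos h₁ p.1).le (poiPMF_pos h₂ p.2).le
  have hnn' : ∀ p : ℕ × ℕ, 0 ≤ poiPMF μ₁ p.2 * poiPMF μ₂ p.1 := fun p =>
    mul_nonneg (poiPMF_pos h₁ p.2).le (poiPMF_pos h₂ p.1).le
  have hf : Summable (fun p : ℕ × ℕ => if p.2 < p.1 then poiPMF μ₁ p.1 * poiPMF μ₂ p.2 else 0) := by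
    apply Summable.of_nonneg_of_le (fun p => ?_) (fun p => ?_) hprod
    · split
      · exact hnn p
      · exact le_refl 0
    · split
      · exact le_refl _
      · exact hnn p
  have hg : Summable (fun p : ℕ × ℕ => if p.2 < p.1 then poiPMF μ₁ p.2 * poiPMF μ₂ p.1 else 0) := by
    apply Summable.of_nonneg_of_le (fun p => ?_) (fun p => ?_) hf
    · split
      · exact hnn' p
      · exact le_refl 0
    · split
      · exact key_le h₂ hlt (by assumption)
      · exact le_refl 0
  -- reindex RHS by prodComm
  have hre : (∑' p : ℕ × ℕ, if p.1 < p.2 then poiPMF μ₁ p.1 * poiPMF μ₂ p.2 else 0)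
      = ∑' p : ℕ × ℕ, if p.2 < p.1 then poiPMF μ₁ p.2 * poiPMF μ₂ p.1 else 0 := by
    rw [← (Equiv.prodComm ℕ ℕ).tsum_eq
      (fun p : ℕ × ℕ => if p.1 < p.2 then poiPMF μ₁ p.1 * poiPMF μ₂ p.2 else 0)]
    rfl
  rw [hre]
  apply Summable.tsum_lt_tsum (i := ((1 : ℕ), (0 : ℕ)))
  · intro p
    by_cases h : p.2 < p.1
    · simp only [h, if_true]
      exact key_le h₂ hlt h
    · simp [h]
  · simp only [show (0 : ℕ) < 1 from Nat.zero_lt_one, if_true]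
    unfold poiPMF
    simp only [pow_zero, pow_one, Nat.factorial]
    push_cast
    nlinarith [mul_pos (mul_pos (Real.exp_pos (-μ₁)) (Real.exp_pos (-μ₂))) (sub_pos.mpr hlt)]
  · exact hg
  · exact hf
end

section
/- If the transient distribution φ(t) = η·s(t − τ) + φ_bkg on [0, T] with s a symmetric unimodal pulse centered at 0, η > 0, φ_bkg ≥ 0, and signal peak located at τ < T/2, then the median of φ lies in the closed interval [τ, T/2]; moreover the median is nonincreasing in η and converges to T/2 as η → 0. -/
open MeasureTheory

/-- For the transient distribution `φ(t) = η · s(t - τ) + c` on `[0, T]`, where `s` is a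
symmetric unimodal integrable pulse centered at `0` (so that the shifted pulse has median
`τ`), `η > 0`, constant background `c ≥ 0`, and peak location `τ < T/2`:
(i) every median `m` of `φ` (a point with `∫₀^m φ = ∫_m^T φ`) lies in `[τ, T/2]`;
(ii) the median is nonincreasing in `η`;
(iii) (for positive background) the median converges to `T/2` as `η → 0`. -/
theorem median_bias_ambient_light (T τ c : ℝ) (s : ℝ → ℝ)
    (hT : 0 < T) (hτ0 : 0 ≤ τ) (hτT : τ < T / 2) (hc : 0 ≤ c)
    (hsnn : ∀ x, 0 ≤ s x)
    (hsint : Integrable s)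
    (hsym : ∀ x, s (-x) = s x)
    (hmono : ∀ a b : ℝ, 0 ≤ a → a ≤ b → s b ≤ s a)
    (hsupp : ∀ x : ℝ, τ < |x| → s x = 0)
    (hmass : 0 < ∫ x, s x) :
    (∀ η : ℝ, 0 < η → ∀ m ∈ Set.Icc (0 : ℝ) T,
      (∫ x in (0 : ℝ)..m, (η * s (x - τ) + c)) = (∫ x in m..T, (η * s (x - τ) + c)) →
      τ ≤ m ∧ m ≤ T / 2)
    ∧ (∀ η₁ η₂ m₁ m₂ : ℝ, 0 < η₁ → η₁ ≤ η₂ →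
        m₁ ∈ Set.Icc (0 : ℝ) T → m₂ ∈ Set.Icc (0 : ℝ) T →
        (∫ x in (0 : ℝ)..m₁, (η₁ * s (x - τ) + c)) = (∫ x in m₁..T, (η₁ * s (x - τ) + c)) →
        (∫ x in (0 : ℝ)..m₂, (η₂ * s (x - τ) + c)) = (∫ x in m₂..T, (η₂ * s (x - τ) + c)) →
        m₂ ≤ m₁)
    ∧ (0 < c → ∀ ε : ℝ, 0 < ε → ∃ η₀ > (0 : ℝ), ∀ η : ℝ, 0 < η → η < η₀ →
        ∀ m ∈ Set.Icc (0 : ℝ) T,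
        (∫ x in (0 : ℝ)..m, (η * s (x - τ) + c)) = (∫ x in m..T, (η * s (x - τ) + c)) →
        |m - T / 2| < ε) := by
  -- basic integrability facts
  have hsi : ∀ a b : ℝ, IntervalIntegrable s volume a b := fun a b =>
    hsint.intervalIntegrable
  have hshifti : ∀ a b : ℝ, IntervalIntegrable (fun x => s (x - τ)) volume a b := by
    intro a b
    simpa using (hsi (a - τ) (b - τ)).comp_sub_right τ
  -- s cannot vanish off 0
  have hnotae : ¬ (∀ x : ℝ, x ≠ 0 → s x = 0) := by
    intro h
    have hsub : {x : ℝ | s x ≠ 0} ⊆ ({0} : Set ℝ) := by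
      intro x hx
      by_contra hx0
      exact hx (h x hx0)
    have hnull : volume {x : ℝ | s x ≠ 0} = 0 :=
      measure_mono_null hsub (measure_singleton 0)
    have hae : s =ᵐ[volume] (fun _ => (0 : ℝ)) := by
      rw [Filter.EventuallyEq, ae_iff]
      simpa using hnull
    have : (∫ x, s x) = 0 := by
      rw [integral_congr_ae hae]; simp
    linarith
  have hτpos : 0 < τ := by
    rcases hτ0.lt_or_eq with h | h
    · exact h
    · exfalso
      apply hnotae
      intro x hx
      exact hsupp x (by rw [← h]; exact abs_pos.mpr hx)
  -- existence of a positive point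
  have hp : ∃ p : ℝ, 0 < p ∧ 0 < s p := by
    by_contra h
    push_neg at h
    apply hnotae
    intro x hx
    rcases lt_or_gt_of_ne hx with h1 | h1
    · rw [← hsym]
      have := h (-x) (by linarith)
      exact le_antisymm this (hsnn (-x))
    · exact le_antisymm (h x h1) (hsnn x)
  -- positivity of integrals near 0
  have hP : ∀ a : ℝ, 0 < a → 0 < ∫ x in (0:ℝ)..a, s x := by
    intro a ha
    obtain ⟨p, hp0, hsp⟩ := hp
    have hq0 : 0 < min a p := lt_min ha hp0
    have h1 : (min a p) * s p ≤ ∫ x in (0:ℝ)..(min a p), s x := by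
      have hcst : (∫ x in (0:ℝ)..(min a p), s p) = (min a p) * s p := by
        rw [intervalIntegral.integral_const]; simp [smul_eq_mul]
      rw [← hcst]
      apply intervalIntegral.integral_mono_on hq0.le intervalIntegrable_const (hsi 0 (min a p))
      intro x hx
      exact hmono x p hx.1 (le_trans hx.2 (min_le_right a p))
    have hadj := intervalIntegral.integral_add_adjacent_intervals (hsi 0 (min a p)) (hsi (min a p) a)
    have h3 : 0 ≤ ∫ x in (min a p)..a, s x :=
      intervalIntegral.integral_nonneg (min_le_left a p) (fun u _ => hsnn u)
    nlinarith [mul_pos hq0 hsp]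
  have hN : ∀ a : ℝ, a < 0 → 0 < ∫ x in a..(0:ℝ), s x := by
    intro a ha
    have h1 : (∫ x in (0:ℝ)..(-a), s x) = ∫ x in a..(0:ℝ), s x := by
      have h2 : (∫ x in (0:ℝ)..(-a), s (-x)) = ∫ x in a..(0:ℝ), s x := by
        rw [intervalIntegral.integral_comp_neg]; simp
      rw [← h2]
      congr 1
      funext x
      exact (hsym x).symm
    rw [← h1]
    exact hP (-a) (by linarith)
  -- integrals to the right of τ vanish
  have hzero : ∀ u : ℝ, τ ≤ u → (∫ x in τ..u, s x) = 0 := by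
    intro u hu
    rw [intervalIntegral.integral_of_le hu]
    apply setIntegral_eq_zero_of_forall_eq_zero
    intro x hx
    apply hsupp
    have h1 : τ < x := hx.1
    rw [abs_of_pos (lt_of_le_of_lt hτ0 h1)]
    exact h1
  have hle0 : ∀ u : ℝ, (∫ x in τ..u, s x) ≤ 0 := by
    intro u
    rcases le_or_gt τ u with h | h
    · rw [hzero u h]
    · rw [intervalIntegral.integral_symm]
      have : 0 ≤ ∫ x in u..τ, s x :=
        intervalIntegral.integral_nonneg h.le (fun x _ => hsnn x)
      linarith
  -- the half mass A
  set A : ℝ := ∫ x in (0:ℝ)..τ, s x with hAdef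
  have hApos : 0 < A := hP τ hτpos
  have hA2 : (∫ x in (-τ)..(0:ℝ), s x) = A := by
    have h2 : (∫ x in (0:ℝ)..τ, s (-x)) = ∫ x in (-τ)..(0:ℝ), s x := by
      rw [intervalIntegral.integral_comp_neg]; simp
    rw [← h2, hAdef]
    congr 1
    funext x
    exact hsym x
  -- G m = cumulative mass of the shifted pulse up to m
  set G : ℝ → ℝ := fun m => ∫ x in (-τ)..(m - τ), s x with hGdef
  have hGτ : G τ = A := by
    simp only [hGdef, sub_self]
    exact hA2
  have hGA : ∀ m : ℝ, G m + (∫ x in (m - τ)..τ, s x) = 2 * A := by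
    intro m
    have hadj := intervalIntegral.integral_add_adjacent_intervals
      (hsi (-τ) (m - τ)) (hsi (m - τ) τ)
    have hfull : (∫ x in (-τ)..τ, s x) = 2 * A := by
      have := intervalIntegral.integral_add_adjacent_intervals (hsi (-τ) 0) (hsi 0 τ)
      rw [hA2] at this
      rw [← this, hAdef]; ring
    rw [hGdef]
    simp only
    linarith [hadj, hfull]
  have hGmono : ∀ m₁ m₂ : ℝ, m₁ ≤ m₂ → G m₁ ≤ G m₂ := by
    intro m₁ m₂ h
    have hadj := intervalIntegral.integral_add_adjacent_intervals
      (hsi (-τ) (m₁ - τ)) (hsi (m₁ - τ) (m₂ - τ))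
    have h3 : 0 ≤ ∫ x in (m₁ - τ)..(m₂ - τ), s x :=
      intervalIntegral.integral_nonneg (by linarith) (fun u _ => hsnn u)
    simp only [hGdef]
    linarith [hadj]
  have hGlt : ∀ m : ℝ, m < τ → G m < A := by
    intro m h
    have hadj := intervalIntegral.integral_add_adjacent_intervals
      (hsi (-τ) (m - τ)) (hsi (m - τ) 0)
    rw [hA2] at hadj
    have := hN (m - τ) (by linarith)
    simp only [hGdef]
    linarith
  have hGgt : ∀ m : ℝ, τ < m → A < G m := by
    intro m h
    have hadj := intervalIntegral.integral_add_adjacent_intervals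
      (hsi (-τ) 0) (hsi 0 (m - τ))
    rw [hA2] at hadj
    have := hP (m - τ) (by linarith)
    simp only [hGdef]
    linarith
  have hGge : ∀ m : ℝ, τ ≤ m → A ≤ G m := by
    intro m h
    calc A = G τ := hGτ.symm
      _ ≤ G m := hGmono τ m h
  have hGub : ∀ m : ℝ, G m ≤ 2 * A := by
    intro m
    have h1 := hGA m
    have h2 : (∫ x in (m - τ)..τ, s x) = - ∫ x in τ..(m - τ), s x := by
      rw [intervalIntegral.integral_symm]
    have h3 := hle0 (m - τ)
    linarith
  -- splitting the integral of φ
  have hsplit : ∀ η a b : ℝ, (∫ x in a..b, (η * s (x - τ) + c))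
      = η * (∫ x in (a - τ)..(b - τ), s x) + c * (b - a) := by
    intro η a b
    rw [intervalIntegral.integral_add ((hshifti a b).const_mul η) intervalIntegrable_const,
      intervalIntegral.integral_const]
    have h1 : (∫ x in a..b, η * s (x - τ)) = η * ∫ x in a..b, s (x - τ) := by
      rw [← intervalIntegral.integral_const_mul]
    rw [h1, intervalIntegral.integral_comp_sub_right]
    simp [smul_eq_mul]
    ring
  -- the reduced median equation
  have hmed : ∀ η m : ℝ,
      (∫ x in (0:ℝ)..m, (η * s (x - τ) + c)) = (∫ x in m..T, (η * s (x - τ) + c)) →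
      η * (G m - A) = c * (T / 2 - m) := by
    intro η m heq
    rw [hsplit, hsplit] at heq
    have hz : (∫ x in τ..(T - τ), s x) = 0 := hzero (T - τ) (by linarith)
    have hadj := intervalIntegral.integral_add_adjacent_intervals
      (hsi (m - τ) τ) (hsi τ (T - τ))
    have h2 := hGA m
    have h0 : (0:ℝ) - τ = -τ := by ring
    rw [h0] at heq
    have hGm : (∫ x in (-τ)..(m - τ), s x) = G m := rfl
    rw [hGm] at heq
    have hR : (∫ x in (m - τ)..(T - τ), s x) = 2 * A - G m := by
      rw [← hadj, hz]
      linarith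
    rw [hR] at heq
    nlinarith [heq]
  -- Part (i)
  have part1 : ∀ η : ℝ, 0 < η → ∀ m ∈ Set.Icc (0 : ℝ) T,
      (∫ x in (0 : ℝ)..m, (η * s (x - τ) + c)) = (∫ x in m..T, (η * s (x - τ) + c)) →
      τ ≤ m ∧ m ≤ T / 2 := by
    intro η hη m _hm hmeq
    have he := hmed η m hmeq
    constructor
    · by_contra h
      push_neg at h
      have h1 : G m < A := hGlt m h
      nlinarith [mul_pos hη (sub_pos.mpr h1), mul_nonneg hc (by linarith : (0:ℝ) ≤ T / 2 - m)]
    · by_contra h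
      push_neg at h
      have h1 : A < G m := hGgt m (by linarith)
      nlinarith [mul_pos hη (sub_pos.mpr h1), mul_nonneg hc (by linarith : (0:ℝ) ≤ m - T / 2)]
  refine ⟨part1, ?_, ?_⟩
  -- Part (ii)
  · intro η₁ η₂ m₁ m₂ hη₁ hη₁₂ hm₁ hm₂ he₁ he₂
    by_contra h
    push_neg at h
    have hη₂ : 0 < η₂ := lt_of_lt_of_le hη₁ hη₁₂
    obtain ⟨hi1a, hi1b⟩ := part1 η₁ hη₁ m₁ hm₁ he₁
    obtain ⟨hi2a, hi2b⟩ := part1 η₂ hη₂ m₂ hm₂ he₂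
    have hE₁ := hmed η₁ m₁ he₁
    have hE₂ := hmed η₂ m₂ he₂
    have hg2 : A < G m₂ := hGgt m₂ (lt_of_le_of_lt hi1a h)
    have hmono' : G m₁ ≤ G m₂ := hGmono _ _ h.le
    have k1 : η₁ * (G m₂ - A) ≤ η₂ * (G m₂ - A) :=
      mul_le_mul_of_nonneg_right hη₁₂ (by linarith)
    have k2 : η₁ * (G m₁ - A) ≤ η₁ * (G m₂ - A) :=
      mul_le_mul_of_nonneg_left (by linarith) hη₁.le
    rcases hc.lt_or_eq with hcpos | hc0
    · have k4 : c * (T / 2 - m₂) < c * (T / 2 - m₁) :=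
        mul_lt_mul_of_pos_left (by linarith) hcpos
      linarith
    · rw [← hc0] at hE₂
      simp at hE₂
      rcases hE₂ with h' | h'
      · linarith
      · linarith
  -- Part (iii)
  · intro hcpos ε hε
    refine ⟨c * ε / A, div_pos (mul_pos hcpos hε) hApos, ?_⟩
    intro η hη hηlt m hm hmeq
    obtain ⟨h1, h2⟩ := part1 η hη m hm hmeq
    have hE := hmed η m hmeq
    have hub : G m - A ≤ A := by linarith [hGub m]
    have hge : A ≤ G m := hGge m h1
    have hb1 : c * (T / 2 - m) ≤ η * A := by
      calc c * (T / 2 - m) = η * (G m - A) := hE.symm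
        _ ≤ η * A := mul_le_mul_of_nonneg_left hub hη.le
    have hηA : η * A < c * ε := (lt_div_iff₀ hApos).mp hηlt
    have h3 : c * (T / 2 - m) < c * ε := lt_of_le_of_lt hb1 hηA
    have h4 : T / 2 - m < ε := lt_of_mul_lt_mul_left h3 hcpos.le
    rw [abs_of_nonpos (by linarith)]
    linarith
end
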